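/- Fix an integer N ≥ 3 and reals δ, θ ∈ ℝ, and regard E_p as a function of the selection intensity β > 0 as well. Then lim_{β→+∞} E_p(θ) = (N²θ/2)·(1 + H_N) if θ < −δ; lim_{β→+∞} E_p(θ) = N²θH_N if θ = −δ; and lim_{β→+∞} E_p(θ) = (N²θ/2)·(H_N + 1/(N−1)) if θ > −δ. -/

import Mathlib

open Real Finset Filter Topology Matrix

/-- Transition matrix `U` between the transient states of the absorbing Markov chain,
for population size `N`, selection intensity `β`, payoff difference `δ` and incentive `θ`.
The index `i : Fin (N-1)` corresponds to the state with `i+1` cooperators;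
`x = β(θ+δ)` and `p_i = i(N-i)/N²`. -/
noncomputable def Umat (N : ℕ) (β δ θ : ℝ) : Matrix (Fin (N - 1)) (Fin (N - 1)) ℝ :=
  fun i j =>
    let x : ℝ := β * (θ + δ)
    let p : ℝ := ((i : ℕ) + 1 : ℝ) * ((N : ℝ) - ((i : ℕ) + 1 : ℝ)) / (N : ℝ) ^ 2
    if (j : ℕ) = (i : ℕ) + 1 then p / (1 + Real.exp (-x))
    else if (j : ℕ) + 1 = (i : ℕ) then p / (1 + Real.exp x)
    else if j = i then 1 - p / (1 + Real.exp (-x)) - p / (1 + Real.exp x)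
    else 0

/-- The fundamental matrix `𝒩 = (I - U)⁻¹` of the absorbing Markov chain. -/
noncomputable def fund (N : ℕ) (β δ θ : ℝ) : Matrix (Fin (N - 1)) (Fin (N - 1)) ℝ :=
  (1 - Umat N β δ θ)⁻¹

/-- Expected total cost of institutional reward,
`E_r(θ) = (θ/2) Σ_{i=1}^{N-1} (n_{1,i} + n_{N-1,i}) · i`
(row `1` is index `0` and row `N-1` is index `N-2`; junk value `0` for `N < 3`). -/
noncomputable def Ereward (N : ℕ) (β δ θ : ℝ) : ℝ :=
  if h : 3 ≤ N then
    (θ / 2) * ∑ j : Fin (N - 1),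
      (fund N β δ θ ⟨0, by omega⟩ j + fund N β δ θ ⟨N - 2, by omega⟩ j) * ((j : ℕ) + 1 : ℝ)
  else 0

/-- Expected total cost of institutional punishment,
`E_p(θ) = (θ/2) Σ_{i=1}^{N-1} (n_{1,i} + n_{N-1,i}) · (N - i)`. -/
noncomputable def Epunish (N : ℕ) (β δ θ : ℝ) : ℝ :=
  if h : 3 ≤ N then
    (θ / 2) * ∑ j : Fin (N - 1),
      (fund N β δ θ ⟨0, by omega⟩ j + fund N β δ θ ⟨N - 2, by omega⟩ j)
        * ((N : ℝ) - ((j : ℕ) + 1 : ℝ))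
  else 0

/-- Harmonic number `H_N = Σ_{j=1}^{N-1} 1/j`. -/
noncomputable def harmonicNum (N : ℕ) : ℝ := ∑ j ∈ Finset.range (N - 1), (1 : ℝ) / ((j : ℕ) + 1)


noncomputable def Sg (r : ℝ) (k : ℕ) : ℝ := ∑ t ∈ Finset.range k, r ^ t
lemma Sg_zero (r : ℝ) : Sg r 0 = 0 := by simp [Sg]
lemma Sg_one (r : ℝ) : Sg r 1 = 1 := by simp [Sg]
lemma Sg_succ (r : ℝ) (k : ℕ) : Sg r (k + 1) = Sg r k + r ^ k := Finset.sum_range_succ _ _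
lemma Sg_pos {r : ℝ} (hr : 0 < r) {k : ℕ} (hk : 0 < k) : 0 < Sg r k :=
  Finset.sum_pos (fun t _ => pow_pos hr t) (Finset.nonempty_range_iff.mpr (by omega))
lemma Sg_add (r : ℝ) (a b : ℕ) : Sg r (a + b) = Sg r a + r ^ a * Sg r b := by
  induction b with
  | zero => simp [Sg_zero]
  | succ n ih => rw [← Nat.add_assoc, Sg_succ, ih, Sg_succ, pow_add]; ring
lemma Sg_geom (r : ℝ) (k : ℕ) : (1 - r) * Sg r k = 1 - r ^ k := by
  induction k with
  | zero => simp [Sg_zero]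
  | succ n ih => rw [Sg_succ, pow_succ]; nlinarith [ih]
lemma Sg_reflect {r : ℝ} (hr : r ≠ 0) (k : ℕ) : Sg r (k + 1) = r ^ k * Sg r⁻¹ (k + 1) := by
  unfold Sg
  rw [Finset.mul_sum, ← Finset.sum_range_reflect]
  refine Finset.sum_congr rfl fun t ht => ?_
  rw [Finset.mem_range] at ht
  rw [inv_pow, ← pow_sub₀ r hr (by omega)]
  congr 1

noncomputable def gex (N : ℕ) (r : ℝ) (k js : ℕ) : ℝ :=
  if k ≤ js then Sg r k * Sg r (N - js) else Sg r js * Sg r (N - k) * r ^ (k - js)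

lemma gex_ge (N : ℕ) (r : ℝ) {k js : ℕ} (h : js ≤ k) :
    gex N r k js = Sg r js * Sg r (N - k) * r ^ (k - js) := by
  unfold gex
  split_ifs with h'
  · have : k = js := le_antisymm h' h
    subst this; simp
  · rfl

lemma gex_rec (N : ℕ) (r : ℝ) (k js : ℕ) (hk1 : 1 ≤ k) (hk2 : k ≤ N - 1)
    (hj1 : 1 ≤ js) (hj2 : js ≤ N - 1) (hN : 2 ≤ N) :
    (1 + r) * gex N r k js - gex N r (k + 1) js - r * gex N r (k - 1) js
      = if k = js then Sg r N else 0 := by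
  rcases lt_trichotomy k js with hlt | heq | hgt
  · rw [if_neg (by omega)]
    obtain ⟨a, rfl⟩ : ∃ a, k = a + 1 := ⟨k - 1, by omega⟩
    unfold gex
    rw [if_pos (by omega), if_pos (by omega), if_pos (by omega)]
    rw [show a + 1 - 1 = a from by omega, Sg_succ r (a+1), Sg_succ r a]
    ring
  · subst heq
    rw [if_pos rfl]
    obtain ⟨a, rfl⟩ : ∃ a, k = a + 1 := ⟨k - 1, by omega⟩
    obtain ⟨b, hb⟩ : ∃ b, N - (a + 1) = b + 1 := ⟨N - a - 2, by omega⟩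
    unfold gex
    rw [if_pos le_rfl, if_neg (by omega), if_pos (by omega)]
    rw [show a + 1 - 1 = a from by omega, show a + 1 + 1 - (a + 1) = 1 from by omega,
      show N - (a + 1 + 1) = b from by omega, hb,
      show N = (b + 1) + (a + 1) from by omega, Sg_add r (b + 1) (a + 1)]
    have hg := Sg_geom r (a + 1)
    rw [Sg_succ r a] at hg
    rw [Sg_succ r a, Sg_succ r b]
    linear_combination (Sg r b + r ^ b) * hg
  · rw [if_neg (by omega)]
    obtain ⟨d, rfl⟩ : ∃ d, k = js + d + 1 := ⟨k - js - 1, by omega⟩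
    obtain ⟨c, hc⟩ : ∃ c, N - (js + d + 1) = c + 1 := ⟨N - js - d - 2, by omega⟩
    rw [gex_ge N r (by omega), gex_ge N r (by omega), gex_ge N r (by omega)]
    rw [hc, show N - (js + d + 1 + 1) = c from by omega,
      show N - (js + d + 1 - 1) = c + 2 from by omega,
      show js + d + 1 - js = d + 1 from by omega,
      show js + d + 1 + 1 - js = d + 2 from by omega,
      show js + d + 1 - 1 - js = d from by omega]
    rw [Sg_succ r (c+1), Sg_succ r c]
    ring

lemma sum_ite_fin {m : ℕ} (c : ℕ) (f : Fin m → ℝ) :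
    (∑ l : Fin m, if (l : ℕ) = c then f l else 0) = if h : c < m then f ⟨c, h⟩ else 0 := by
  split_ifs with h
  · rw [Finset.sum_eq_single ⟨c, h⟩]
    · simp
    · intro l _ hne
      rw [if_neg]
      intro hc
      exact hne (by simp [Fin.ext_iff, hc])
    · simp
  · refine Finset.sum_eq_zero fun l _ => if_neg ?_
    have := l.isLt
    omega

lemma sum_ite_fin' {m : ℕ} (c : ℕ) (f : Fin m → ℝ) :
    (∑ l : Fin m, if (l : ℕ) + 1 = c then f l else 0)
      = if h : c - 1 < m ∧ 1 ≤ c then f ⟨c - 1, h.1⟩ else 0 := by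
  split_ifs with h
  · rw [Finset.sum_eq_single ⟨c - 1, h.1⟩]
    · rw [if_pos (by simp; omega)]
    · intro l _ hne
      rw [if_neg]
      intro hc
      refine hne ?_
      simp only [Fin.ext_iff]
      omega
    · simp
  · refine Finset.sum_eq_zero fun l _ => if_neg ?_
    have := l.isLt
    omega

lemma oneSubU_apply (N : ℕ) (β δ θ : ℝ) (i l : Fin (N - 1)) :
    (1 - Umat N β δ θ) i l =
      (if (l : ℕ) = (i : ℕ) then
          ((i : ℕ) + 1 : ℝ) * ((N : ℝ) - ((i : ℕ) + 1 : ℝ)) / (N : ℝ) ^ 2 else 0)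
      - (if (l : ℕ) = (i : ℕ) + 1 then
          ((i : ℕ) + 1 : ℝ) * ((N : ℝ) - ((i : ℕ) + 1 : ℝ)) / (N : ℝ) ^ 2
            / (1 + Real.exp (-(β * (θ + δ)))) else 0)
      - (if (l : ℕ) + 1 = (i : ℕ) then
          ((i : ℕ) + 1 : ℝ) * ((N : ℝ) - ((i : ℕ) + 1 : ℝ)) / (N : ℝ) ^ 2
            / (1 + Real.exp (β * (θ + δ))) else 0) := by
  simp only [Matrix.sub_apply, Matrix.one_apply, Umat, Fin.ext_iff, Real.exp_neg]
  set E := Real.exp (β * (θ + δ)) with hEdef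
  have hE0 : (0 : ℝ) < E := Real.exp_pos _
  have hEne : E ≠ 0 := hE0.ne'
  have h1 : (1 : ℝ) + E ≠ 0 := by positivity
  have h2 : (1 : ℝ) + E⁻¹ ≠ 0 := by positivity
  have h3 : 1 + E⁻¹ = (E + 1) / E := by field_simp
  have hkey : (1 + E⁻¹)⁻¹ + (1 + E)⁻¹ = (1 : ℝ) := by
    rw [h3, inv_div]
    field_simp
    ring
  split_ifs <;> first
    | omega
    | ring1
    | (simp only [div_eq_mul_inv];
       linear_combination (((i : ℕ) : ℝ) + 1) * ((N : ℝ) - (((i : ℕ) : ℝ) + 1)) / (N : ℝ) ^ 2 * hkey)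

noncomputable def Wm (N : ℕ) (r : ℝ) : Matrix (Fin (N - 1)) (Fin (N - 1)) ℝ :=
  fun i j => (1 + r) / Sg r N * gex N r ((i : ℕ) + 1) ((j : ℕ) + 1)
      * ((N : ℝ) ^ 2 / ((((j : ℕ) : ℝ) + 1) * ((N : ℝ) - (((j : ℕ) : ℝ) + 1))))

lemma oneSubU_mul_W (N : ℕ) (hN : 3 ≤ N) (β δ θ : ℝ) :
    (1 - Umat N β δ θ) * Wm N (Real.exp (-(β * (θ + δ)))) = 1 := by
  set r := Real.exp (-(β * (θ + δ))) with hrdef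
  have hr : 0 < r := Real.exp_pos _
  have hrx : Real.exp (β * (θ + δ)) = r⁻¹ := by rw [hrdef, ← Real.exp_neg, neg_neg]
  have hSN : 0 < Sg r N := Sg_pos hr (by omega)
  ext i j
  rw [Matrix.mul_apply, Matrix.one_apply]
  have hi := i.isLt
  have hj := j.isLt
  simp_rw [oneSubU_apply, hrx, ← hrdef, sub_mul, ite_mul, zero_mul, Finset.sum_sub_distrib,
    sum_ite_fin, sum_ite_fin']
  rw [dif_pos hi]
  simp only [Fin.eta]
  have hB : (if h : (i : ℕ) + 1 < N - 1 then
        (((i : ℕ) : ℝ) + 1) * ((N : ℝ) - (((i : ℕ) : ℝ) + 1)) / (N : ℝ) ^ 2 / (1 + r)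
          * Wm N r ⟨(i : ℕ) + 1, h⟩ j
      else 0) =
      (((i : ℕ) : ℝ) + 1) * ((N : ℝ) - (((i : ℕ) : ℝ) + 1)) / (N : ℝ) ^ 2 / (1 + r) *
        ((1 + r) / Sg r N * gex N r ((i : ℕ) + 2) ((j : ℕ) + 1)
          * ((N : ℝ) ^ 2 / ((((j : ℕ) : ℝ) + 1) * ((N : ℝ) - (((j : ℕ) : ℝ) + 1))))) := by
    split_ifs with h
    · rfl
    · have hg : gex N r ((i : ℕ) + 2) ((j : ℕ) + 1) = 0 := by
        rw [show (i : ℕ) + 2 = N from by omega, gex_ge N r (by omega),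
          show N - N = 0 from by omega, Sg_zero]
        ring
      rw [hg]
      ring
  have hC : (if h : (i : ℕ) - 1 < N - 1 ∧ 1 ≤ (i : ℕ) then
        (((i : ℕ) : ℝ) + 1) * ((N : ℝ) - (((i : ℕ) : ℝ) + 1)) / (N : ℝ) ^ 2 / (1 + r⁻¹)
          * Wm N r ⟨(i : ℕ) - 1, h.1⟩ j
      else 0) =
      (((i : ℕ) : ℝ) + 1) * ((N : ℝ) - (((i : ℕ) : ℝ) + 1)) / (N : ℝ) ^ 2 / (1 + r⁻¹) *
        ((1 + r) / Sg r N * gex N r ((i : ℕ)) ((j : ℕ) + 1)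
          * ((N : ℝ) ^ 2 / ((((j : ℕ) : ℝ) + 1) * ((N : ℝ) - (((j : ℕ) : ℝ) + 1))))) := by
    split_ifs with h
    · simp only [Wm]
      rw [show (i : ℕ) - 1 + 1 = (i : ℕ) from by omega]
    · have h0 : (i : ℕ) = 0 := by omega
      have hg : gex N r ((i : ℕ)) ((j : ℕ) + 1) = 0 := by
        rw [h0]
        unfold gex
        rw [if_pos (by omega), Sg_zero]
        ring
      rw [hg]
      ring
  rw [hB, hC]
  show (((i : ℕ) : ℝ) + 1) * ((N : ℝ) - (((i : ℕ) : ℝ) + 1)) / (N : ℝ) ^ 2 *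
        ((1 + r) / Sg r N * gex N r ((i : ℕ) + 1) ((j : ℕ) + 1)
          * ((N : ℝ) ^ 2 / ((((j : ℕ) : ℝ) + 1) * ((N : ℝ) - (((j : ℕ) : ℝ) + 1))))) - _ - _ = _
  have hrne : r ≠ 0 := hr.ne'
  have h1r : (1 : ℝ) + r ≠ 0 := by positivity
  have h1r' : (1 : ℝ) + r⁻¹ ≠ 0 := by positivity
  have hSNne : Sg r N ≠ 0 := hSN.ne'
  have expand : ∀ P C g1 g2 g0 : ℝ,
      P * ((1 + r) / Sg r N * g1 * C) - P / (1 + r) * ((1 + r) / Sg r N * g2 * C)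
        - P / (1 + r⁻¹) * ((1 + r) / Sg r N * g0 * C)
      = P * C / Sg r N * ((1 + r) * g1 - g2 - r * g0) := by
    intros P C g1 g2 g0
    field_simp
    ring
  rw [expand]
  have key := gex_rec N r ((i : ℕ) + 1) ((j : ℕ) + 1) (by omega) (by omega) (by omega)
    (by omega) (by omega)
  rw [show (i : ℕ) + 1 + 1 = (i : ℕ) + 2 from rfl,
    show (i : ℕ) + 1 - 1 = (i : ℕ) from by omega] at key
  rw [key]
  by_cases hij : i = j
  · subst hij
    rw [if_pos rfl, if_pos rfl, div_mul_cancel₀ _ hSNne]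
    have hjN : ((i : ℕ) : ℝ) + 1 < N := by exact_mod_cast (show (i : ℕ) + 1 < N from by omega)
    have hj0 : (0 : ℝ) < ((i : ℕ) : ℝ) + 1 := by positivity
    have hNlt : (0 : ℝ) < ((N : ℝ) - (((i : ℕ) : ℝ) + 1)) := by linarith
    field_simp
  · rw [if_neg (by simp only [Fin.ext_iff] at hij; omega), if_neg hij, mul_zero]

lemma fund_eq (N : ℕ) (hN : 3 ≤ N) (β δ θ : ℝ) :
    fund N β δ θ = Wm N (Real.exp (-(β * (θ + δ)))) :=
  Matrix.inv_eq_right_inv (oneSubU_mul_W N hN β δ θ)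

noncomputable def Efun (N : ℕ) (θ r : ℝ) : ℝ :=
  θ / 2 * ((1 + r) / Sg r N) *
    ∑ j ∈ Finset.range (N - 1),
      (N : ℝ) ^ 2 / ((j : ℝ) + 1) * (Sg r (N - 1 - j) + Sg r (j + 1) * r ^ (N - 2 - j))

lemma Epunish_eq (N : ℕ) (hN : 3 ≤ N) (β δ θ : ℝ) :
    Epunish N β δ θ = Efun N θ (Real.exp (-(β * (θ + δ)))) := by
  set r := Real.exp (-(β * (θ + δ))) with hrdef
  have hr : 0 < r := Real.exp_pos _
  have hSN : 0 < Sg r N := Sg_pos hr (by omega)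
  unfold Epunish
  rw [dif_pos hN, fund_eq N hN β δ θ, ← hrdef]
  unfold Efun
  rw [show (∑ j ∈ Finset.range (N - 1),
        (N : ℝ) ^ 2 / ((j : ℝ) + 1) * (Sg r (N - 1 - j) + Sg r (j + 1) * r ^ (N - 2 - j)))
      = ∑ j : Fin (N - 1), (N : ℝ) ^ 2 / (((j : ℕ) : ℝ) + 1)
          * (Sg r (N - 1 - (j : ℕ)) + Sg r ((j : ℕ) + 1) * r ^ (N - 2 - (j : ℕ)))
    from (Fin.sum_univ_eq_sum_range _ _).symm]
  rw [mul_assoc]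
  refine congrArg (θ / 2 * ·) ?_
  rw [Finset.mul_sum]
  refine Finset.sum_congr rfl fun j _ => ?_
  have hj := j.isLt
  simp only [Wm]
  have hg1 : gex N r (((⟨0, by omega⟩ : Fin (N - 1)) : ℕ) + 1) ((j : ℕ) + 1)
      = Sg r (N - 1 - (j : ℕ)) := by
    unfold gex
    rw [if_pos (by simp), Sg_one, one_mul, show N - ((j : ℕ) + 1) = N - 1 - (j : ℕ) from by omega]
  have hg2 : gex N r (((⟨N - 2, by omega⟩ : Fin (N - 1)) : ℕ) + 1) ((j : ℕ) + 1)
      = Sg r ((j : ℕ) + 1) * r ^ (N - 2 - (j : ℕ)) := by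
    rw [show (((⟨N - 2, by omega⟩ : Fin (N - 1)) : ℕ) + 1) = N - 1 from by simp; omega,
      gex_ge N r (by omega), show N - (N - 1) = 1 from by omega, Sg_one, mul_one,
      show N - 1 - ((j : ℕ) + 1) = N - 2 - (j : ℕ) from by omega]
  rw [hg1, hg2]
  have hjN : ((j : ℕ) : ℝ) + 1 < N := by exact_mod_cast (show (j : ℕ) + 1 < N from by omega)
  have hj0 : (0 : ℝ) < ((j : ℕ) : ℝ) + 1 := by positivity
  have hNj : (0 : ℝ) < (N : ℝ) - (((j : ℕ) : ℝ) + 1) := by linarith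
  have hN0 : (0 : ℝ) < (N : ℝ) := by positivity
  field_simp

noncomputable def Efun2 (N : ℕ) (θ s : ℝ) : ℝ :=
  θ / 2 * ((1 + s) / Sg s N) *
    ∑ j ∈ Finset.range (N - 1),
      (N : ℝ) ^ 2 / ((j : ℝ) + 1) * (Sg s (j + 1) + s ^ j * Sg s (N - 1 - j))

lemma Efun_inv (N : ℕ) (hN : 3 ≤ N) (θ r : ℝ) (hr : 0 < r) :
    Efun N θ r = Efun2 N θ r⁻¹ := by
  have hrne : r ≠ 0 := hr.ne'
  have hs : (0 : ℝ) < r⁻¹ := by positivity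
  unfold Efun Efun2
  rw [mul_assoc, mul_assoc]
  refine congrArg (θ / 2 * ·) ?_
  rw [Finset.mul_sum, Finset.mul_sum]
  refine Finset.sum_congr rfl fun j hjm => ?_
  rw [Finset.mem_range] at hjm
  obtain ⟨d, hd⟩ : ∃ d, N = j + d + 2 := ⟨N - j - 2, by omega⟩
  subst hd
  rw [show j + d + 2 - 1 - j = d + 1 from by omega, show j + d + 2 - 2 - j = d from by omega]
  have hX : 0 < Sg r⁻¹ (j + d + 2) := Sg_pos hs (by omega)
  have hXr : 0 < Sg r (j + d + 2) := Sg_pos hr (by omega)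
  have hsj : (r⁻¹) ^ j * r ^ j = 1 := by
    rw [inv_pow, inv_mul_cancel₀ (pow_ne_zero _ hrne)]
  have main : (1 + r) * (Sg r (d + 1) + Sg r (j + 1) * r ^ d) * Sg r⁻¹ (j + d + 2)
      = (1 + r⁻¹) * (Sg r⁻¹ (j + 1) + (r⁻¹) ^ j * Sg r⁻¹ (d + 1)) * Sg r (j + d + 2) := by
    have h1 : (1 : ℝ) + r = r * (1 + r⁻¹) := by field_simp; ring
    rw [h1, show (j + d + 2) = (j + d + 1) + 1 from rfl, Sg_reflect hrne (j + d + 1),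
      Sg_reflect hrne d, Sg_reflect hrne j, show (j + d + 1) + 1 = j + d + 2 from rfl]
    linear_combination (-(1 + r⁻¹) * Sg r⁻¹ (j + d + 2) * Sg r⁻¹ (d + 1) * r ^ (d + 1)) * hsj
  have final : ∀ (K SA SB P Q : ℝ), SA ≠ 0 → SB ≠ 0 →
      ((1 + r) * P * SB = (1 + r⁻¹) * Q * SA) →
      (1 + r) / SA * (K * P) = (1 + r⁻¹) / SB * (K * Q) := by
    intro K SA SB P Q hSA hSB h
    rw [div_mul_eq_mul_div, div_mul_eq_mul_div, div_eq_div_iff hSA hSB]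
    linear_combination K * h
  exact final _ _ _ _ _ hXr.ne' hX.ne' main

lemma Sg_one_left (k : ℕ) : Sg 1 k = (k : ℝ) := by simp [Sg]

lemma Sg_zero_left {k : ℕ} (hk : 1 ≤ k) : Sg 0 k = 1 := by
  unfold Sg
  rw [Finset.sum_eq_single 0]
  · simp
  · intro t _ ht
    exact zero_pow ht
  · intro h
    simp only [Finset.mem_range] at h
    omega

lemma Sg_cont (k : ℕ) : Continuous fun r : ℝ => Sg r k := by
  unfold Sg
  exact continuous_finset_sum _ fun t _ => continuous_pow t

lemma Efun_one (N : ℕ) (hN : 3 ≤ N) (θ : ℝ) :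
    Efun N θ 1 = (N : ℝ) ^ 2 * θ * harmonicNum N := by
  have hN0 : ((N : ℝ)) ≠ 0 := by positivity
  unfold Efun harmonicNum
  rw [Sg_one_left]
  rw [show (∑ j ∈ Finset.range (N - 1),
        (N : ℝ) ^ 2 / ((j : ℝ) + 1) * (Sg 1 (N - 1 - j) + Sg 1 (j + 1) * 1 ^ (N - 2 - j)))
      = ∑ j ∈ Finset.range (N - 1), (N : ℝ) ^ 2 * (N : ℝ) * (1 / ((j : ℝ) + 1)) from
    Finset.sum_congr rfl fun j hj => by
      rw [Finset.mem_range] at hj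
      rw [Sg_one_left, Sg_one_left, one_pow, mul_one]
      have : ((N - 1 - j : ℕ) : ℝ) = (N : ℝ) - 1 - (j : ℝ) := by
        push_cast [Nat.cast_sub (by omega : j ≤ N - 1), Nat.cast_sub (by omega : 1 ≤ N)]
        ring
      rw [this]
      push_cast
      have hj0 : ((j : ℝ) + 1) ≠ 0 := by positivity
      field_simp
      ring]
  rw [← Finset.mul_sum]
  field_simp
  ring

lemma Efun_zero (N : ℕ) (hN : 3 ≤ N) (θ : ℝ) :
    Efun N θ 0 = (N : ℝ) ^ 2 * θ / 2 * (harmonicNum N + 1 / ((N : ℝ) - 1)) := by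
  unfold Efun harmonicNum
  rw [Sg_zero_left (by omega : 1 ≤ N)]
  have hsum : (∑ j ∈ Finset.range (N - 1),
        (N : ℝ) ^ 2 / ((j : ℝ) + 1) * (Sg 0 (N - 1 - j) + Sg 0 (j + 1) * (0 : ℝ) ^ (N - 2 - j)))
      = (∑ j ∈ Finset.range (N - 1), (N : ℝ) ^ 2 * (1 / ((j : ℝ) + 1)))
        + (N : ℝ) ^ 2 / ((N : ℝ) - 1) := by
    rw [show (∑ j ∈ Finset.range (N - 1),
          (N : ℝ) ^ 2 / ((j : ℝ) + 1) * (Sg 0 (N - 1 - j) + Sg 0 (j + 1) * (0 : ℝ) ^ (N - 2 - j)))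
        = ∑ j ∈ Finset.range (N - 1),
          ((N : ℝ) ^ 2 * (1 / ((j : ℝ) + 1)) + (N : ℝ) ^ 2 / ((j : ℝ) + 1) * (0 : ℝ) ^ (N - 2 - j))
      from Finset.sum_congr rfl fun j hj => by
        rw [Finset.mem_range] at hj
        rw [Sg_zero_left (by omega : 1 ≤ N - 1 - j), Sg_zero_left (by omega : 1 ≤ j + 1)]
        ring]
    rw [Finset.sum_add_distrib]
    congr 1
    rw [Finset.sum_eq_single (N - 2)]
    · rw [show N - 2 - (N - 2) = 0 from by omega, pow_zero, mul_one]
      congr 1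
      push_cast [Nat.cast_sub (by omega : 2 ≤ N)]
      ring
    · intro t ht htne
      rw [Finset.mem_range] at ht
      rw [zero_pow (by omega : N - 2 - t ≠ 0), mul_zero]
    · intro h
      rw [Finset.mem_range] at h
      omega
  rw [hsum, ← Finset.mul_sum]
  field_simp
  ring

lemma Efun2_zero (N : ℕ) (hN : 3 ≤ N) (θ : ℝ) :
    Efun2 N θ 0 = (N : ℝ) ^ 2 * θ / 2 * (1 + harmonicNum N) := by
  unfold Efun2 harmonicNum
  rw [Sg_zero_left (by omega : 1 ≤ N)]
  have hsum : (∑ j ∈ Finset.range (N - 1),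
        (N : ℝ) ^ 2 / ((j : ℝ) + 1) * (Sg 0 (j + 1) + (0 : ℝ) ^ j * Sg 0 (N - 1 - j)))
      = (∑ j ∈ Finset.range (N - 1), (N : ℝ) ^ 2 * (1 / ((j : ℝ) + 1))) + (N : ℝ) ^ 2 := by
    rw [show (∑ j ∈ Finset.range (N - 1),
          (N : ℝ) ^ 2 / ((j : ℝ) + 1) * (Sg 0 (j + 1) + (0 : ℝ) ^ j * Sg 0 (N - 1 - j)))
        = ∑ j ∈ Finset.range (N - 1),
          ((N : ℝ) ^ 2 * (1 / ((j : ℝ) + 1)) + (N : ℝ) ^ 2 / ((j : ℝ) + 1) * (0 : ℝ) ^ j)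
      from Finset.sum_congr rfl fun j hj => by
        rw [Finset.mem_range] at hj
        rw [Sg_zero_left (by omega : 1 ≤ N - 1 - j), Sg_zero_left (by omega : 1 ≤ j + 1)]
        ring]
    rw [Finset.sum_add_distrib]
    congr 1
    rw [Finset.sum_eq_single 0]
    · norm_num
    · intro t ht htne
      rw [zero_pow htne, mul_zero]
    · intro h
      rw [Finset.mem_range] at h
      omega
  rw [hsum, ← Finset.mul_sum]
  field_simp
  ring

lemma Efun_contAt (N : ℕ) (hN : 3 ≤ N) (θ : ℝ) : ContinuousAt (fun r => Efun N θ r) 0 := by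
  have hd : Sg (0 : ℝ) N ≠ 0 := by rw [Sg_zero_left (by omega : 1 ≤ N)]; norm_num
  unfold Efun
  apply ContinuousAt.mul
  · apply ContinuousAt.mul continuousAt_const
    exact ContinuousAt.div ((continuous_const.add continuous_id).continuousAt)
      (Sg_cont N).continuousAt hd
  · exact (continuous_finset_sum _ fun j _ => continuous_const.mul
      (((Sg_cont (N - 1 - j)).add ((Sg_cont (j + 1)).mul (continuous_pow _))))).continuousAt

lemma Efun2_contAt (N : ℕ) (hN : 3 ≤ N) (θ : ℝ) : ContinuousAt (fun s => Efun2 N θ s) 0 := by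
  have hd : Sg (0 : ℝ) N ≠ 0 := by rw [Sg_zero_left (by omega : 1 ≤ N)]; norm_num
  unfold Efun2
  apply ContinuousAt.mul
  · apply ContinuousAt.mul continuousAt_const
    exact ContinuousAt.div ((continuous_const.add continuous_id).continuousAt)
      (Sg_cont N).continuousAt hd
  · exact (continuous_finset_sum _ fun j _ => continuous_const.mul
      (((Sg_cont (j + 1)).add ((continuous_pow j).mul (Sg_cont (N - 1 - j)))))).continuousAt

/-- Large-selection limits of the punishment cost: as β → +∞, E_p(θ) tends to
(N²θ/2)(1 + H_N) if θ < −δ, to N²θH_N if θ = −δ, and to (N²θ/2)(H_N + 1/(N−1)) if θ > −δ. -/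
theorem large_selection_limit_punishment (N : ℕ) (hN : 3 ≤ N) (δ θ : ℝ) :
    (θ < -δ → Tendsto (fun β : ℝ => Epunish N β δ θ) atTop
      (𝓝 ((N : ℝ) ^ 2 * θ / 2 * (1 + harmonicNum N)))) ∧
    (θ = -δ → Tendsto (fun β : ℝ => Epunish N β δ θ) atTop
      (𝓝 ((N : ℝ) ^ 2 * θ * harmonicNum N))) ∧
    (θ > -δ → Tendsto (fun β : ℝ => Epunish N β δ θ) atTop
      (𝓝 ((N : ℝ) ^ 2 * θ / 2 * (harmonicNum N + 1 / ((N : ℝ) - 1))))) := by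
  refine ⟨?_, ?_, ?_⟩
  · intro h
    have hc : θ + δ < 0 := by linarith
    have heq : ∀ β : ℝ, Epunish N β δ θ = Efun2 N θ (Real.exp (β * (θ + δ))) := by
      intro β
      rw [Epunish_eq N hN β δ θ, Efun_inv N hN θ _ (Real.exp_pos _), Real.exp_neg, inv_inv]
    have h1 : Tendsto (fun β : ℝ => β * (θ + δ)) atTop atBot :=
      tendsto_id.atTop_mul_const_of_neg hc
    have h3 : Tendsto (fun β : ℝ => Real.exp (β * (θ + δ))) atTop (𝓝 0) :=
      Real.tendsto_exp_atBot.comp h1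
    have h4 := ((Efun2_contAt N hN θ).tendsto).comp h3
    rw [Efun2_zero N hN θ] at h4
    exact Tendsto.congr (fun β => (heq β).symm) h4
  · intro h
    have hsum : θ + δ = 0 := by linarith
    have heq : ∀ β : ℝ, Epunish N β δ θ = Efun N θ 1 := by
      intro β
      rw [Epunish_eq N hN β δ θ, hsum]
      norm_num
    rw [show (N : ℝ) ^ 2 * θ * harmonicNum N = Efun N θ 1 from (Efun_one N hN θ).symm]
    exact Tendsto.congr (fun β => (heq β).symm) tendsto_const_nhds
  · intro h
    have hc : 0 < θ + δ := by linarith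
    have h1 : Tendsto (fun β : ℝ => -(β * (θ + δ))) atTop atBot :=
      tendsto_neg_atTop_atBot.comp (tendsto_id.atTop_mul_const hc)
    have h3 : Tendsto (fun β : ℝ => Real.exp (-(β * (θ + δ)))) atTop (𝓝 0) :=
      Real.tendsto_exp_atBot.comp h1
    have h4 := ((Efun_contAt N hN θ).tendsto).comp h3
    rw [Efun_zero N hN θ] at h4
    exact Tendsto.congr (fun β => (Epunish_eq N hN β δ θ).symm) h4
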